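/- Let F(θ,x) = (R(θ), ψ_θ(x)) be an isoclinic equiconcave skew product on B × [0,a]: each ψ_θ : [0,a] → [0,a] satisfies ψ_θ(0) = 0, there is β > 0 such that each ψ_θ is βγ_θ-concave (γ_θ = sup ψ_θ), and ψ_θ([0,a]) ⊆ [0, b_{R(θ)}) where b_σ is the isoclinic point of ψ_σ. Call θ pinching if ψ_{Rⁿ(θ)} ≡ 0 for infinitely many n ≥ 0, and call φ : B → [0,a] preinvariant if for each θ there is N with ψ_{Rⁿ(θ)}(φ(Rⁿ(θ))) = φ(R^{n+1}(θ)) for all n ≥ N. If φ is preinvariant and φ(θ) > 0 whenever θ is not pinching, then for every (θ,x) whose forward F-orbit never meets B × {0}, we have |π₂(Fⁿ(θ,x)) − φ(Rⁿ(θ))| → 0 as n → ∞. -/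

import Mathlib

set_option maxHeartbeats 1000000

open Set Filter

private lemma conc_combo {a : ℝ} {g : ℝ → ℝ} (hg : ConcaveOn ℝ (Icc 0 a) g)
    {x y z : ℝ} (hx : x ∈ Icc 0 a) (hz : z ∈ Icc 0 a) (hxy : x < y) (hyz : y < z) :
    (z - y) * g x + (y - x) * g z ≤ (z - x) * g y := by
  have hxz : x < z := hxy.trans hyz
  have h1 : (0:ℝ) < z - x := by linarith
  have h := hg.2 hx hz (div_nonneg (by linarith) (by linarith) : (0:ℝ) ≤ (z - y)/(z - x))
    (div_nonneg (by linarith) (by linarith) : (0:ℝ) ≤ (y - x)/(z - x))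
    (by field_simp; ring : (z - y)/(z - x) + (y - x)/(z - x) = 1)
  have hcomb : (z - y)/(z - x) * x + (y - x)/(z - x) * z = y := by field_simp; ring
  simp only [smul_eq_mul] at h
  rw [hcomb] at h
  rw [div_mul_eq_mul_div, div_mul_eq_mul_div, ← add_div, div_le_iff₀ h1] at h
  linarith [h]

private lemma concave_ratio {a : ℝ} {g : ℝ → ℝ} (hg : ConcaveOn ℝ (Icc 0 a) g)
    (hg0 : g 0 = 0) {u v : ℝ} (hu : 0 < u) (huv : u ≤ v) (hva : v ≤ a) :
    u * g v ≤ v * g u := by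
  rcases eq_or_lt_of_le huv with rfl | huv'
  · exact le_rfl
  have hv : 0 < v := hu.trans huv'
  have h0 : (0:ℝ) ∈ Icc 0 a := ⟨le_rfl, by linarith⟩
  have h := hg.2 h0 ⟨hv.le, hva⟩
    (by rw [sub_nonneg, div_le_one hv]; exact huv : (0:ℝ) ≤ 1 - u/v)
    (by positivity : (0:ℝ) ≤ u/v) (by ring : (1 - u/v) + u/v = 1)
  simp only [smul_eq_mul, mul_zero, zero_add, hg0, mul_zero, zero_add] at h
  have hcomb : u / v * v = u := by field_simp
  rw [hcomb] at h
  rw [div_mul_eq_mul_div, div_le_iff₀ hv] at h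
  linarith [h]

private lemma left_deriv_le_slope {a : ℝ} {g : ℝ → ℝ} (hg : ConcaveOn ℝ (Icc 0 a) g)
    {u v d : ℝ} (hu : u ∈ Icc 0 a) (huv : u < v) (hva : v ≤ a)
    (hd : HasDerivWithinAt g d (Iio v) v) :
    d ≤ (g v - g u) / (v - u) := by
  have hvmem : v ∈ Icc 0 a := ⟨hu.1.trans huv.le, hva⟩
  have ht : Tendsto (slope g v) (nhdsWithin v (Iio v)) (nhds d) := by
    have h := hasDerivWithinAt_iff_tendsto_slope.mp hd
    rwa [Set.diff_singleton_eq_self (by simp)] at h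
  apply le_of_tendsto ht
  filter_upwards [Ioo_mem_nhdsLT_of_mem (show v ∈ Ioc u v from ⟨huv, le_rfl⟩)] with y hy
  have hcc := conc_combo hg hu hvmem hy.1 hy.2
  have h1 : (0:ℝ) < v - y := by linarith [hy.2]
  have h2 : (0:ℝ) < v - u := by linarith
  have hs : slope g v y = (g v - g y) / (v - y) := by
    rw [slope_def_field, div_eq_div_iff (by linarith : y - v ≠ 0) (by linarith : v - y ≠ 0)]
    ring
  rw [hs, div_le_div_iff₀ h1 h2]
  nlinarith [hcc]

private lemma slope_le_left_deriv {a : ℝ} {g : ℝ → ℝ} (hg : ConcaveOn ℝ (Icc 0 a) g)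
    {v x d : ℝ} (hv : 0 < v) (hvx : v < x) (hxa : x ≤ a)
    (hd : HasDerivWithinAt g d (Iio v) v) :
    (g x - g v) / (x - v) ≤ d := by
  have hxmem : x ∈ Icc 0 a := ⟨(hv.trans hvx).le, hxa⟩
  have ht : Tendsto (slope g v) (nhdsWithin v (Iio v)) (nhds d) := by
    have h := hasDerivWithinAt_iff_tendsto_slope.mp hd
    rwa [Set.diff_singleton_eq_self (by simp)] at h
  apply ge_of_tendsto ht
  filter_upwards [Ioo_mem_nhdsLT_of_mem (show v ∈ Ioc 0 v from ⟨hv, le_rfl⟩)] with y hy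
  have hymem : y ∈ Icc 0 a := ⟨hy.1.le, by linarith [hy.2]⟩
  have hcc := conc_combo hg hymem hxmem hy.2 hvx
  have h1 : (0:ℝ) < v - y := by linarith [hy.2]
  have h2 : (0:ℝ) < x - v := by linarith
  have hs : slope g v y = (g v - g y) / (v - y) := by
    rw [slope_def_field, div_eq_div_iff (by linarith : y - v ≠ 0) (by linarith : v - y ≠ 0)]
    ring
  rw [hs, div_le_div_iff₀ h2 h1]
  nlinarith [hcc]

private lemma key_step {a β : ℝ} (ha : 0 < a) (hβ : 0 < β) (f f' : ℝ → ℝ)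
    (hmap : MapsTo f (Icc 0 a) (Icc 0 a)) (hzero : f 0 = 0)
    (hconc : ConcaveOn ℝ (Icc 0 a) (fun x => f x + β * sSup (f '' Icc 0 a) * x ^ 2))
    (hderiv : ∀ x ∈ Ioc (0:ℝ) a, HasDerivWithinAt f (f' x) (Iio x) x)
    {u v : ℝ} (hu : 0 < u) (huv : u ≤ v) (hva : v ≤ a)
    (hvb : v < sSup {x | x ∈ Ioc (0:ℝ) a ∧ |f' x| < f x / x})
    (hfu : 0 < f u) (hfv : 0 < f v)
    {m l δ : ℝ} (hm0 : 0 ≤ m) (hl0 : 0 ≤ l) (hδ0 : 0 ≤ δ) (hm : m ≤ u) (hl : l ≤ v - u)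
    (hδ1 : δ ≤ β*m*l/(1+β*m*l)) (hδ2 : δ ≤ β*m*l^2/a) :
    max (f u) (f v) * u ≤ (1 - δ) * (v * min (f u) (f v)) := by
  have hv : 0 < v := hu.trans_le huv
  have humem : u ∈ Icc 0 a := ⟨hu.le, huv.trans hva⟩
  have hvmem : v ∈ Icc 0 a := ⟨hv.le, hva⟩
  have hbdd : BddAbove (f '' Icc 0 a) := ⟨a, by rintro _ ⟨y, hy, rfl⟩; exact (hmap hy).2⟩
  set γ := sSup (f '' Icc 0 a) with hγdef
  have hγu : f u ≤ γ := le_csSup hbdd ⟨u, humem, rfl⟩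
  have hγv : f v ≤ γ := le_csSup hbdd ⟨v, hvmem, rfl⟩
  have hγpos : 0 < γ := hfu.trans_le hγu
  clear_value γ
  set c := β * γ with hcdef
  have hc : 0 < c := mul_pos hβ hγpos
  clear_value c
  set g : ℝ → ℝ := fun x => f x + c * x ^ 2 with hgdef
  have hgconc : ConcaveOn ℝ (Icc 0 a) g := hconc
  have hg0 : g 0 = 0 := by rw [hgdef]; simp [hzero]
  clear_value g
  -- derivative of g
  have hdg : ∀ w, w ∈ Ioc (0:ℝ) a → HasDerivWithinAt g (f' w + 2*c*w) (Iio w) w := by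
    intro w hw
    rw [hgdef]
    have h2 : HasDerivWithinAt (fun x : ℝ => c * x ^ 2) (2*c*w) (Iio w) w := by
      have h3 := ((hasDerivAt_pow 2 w).const_mul c).hasDerivWithinAt (s := Iio w)
      refine h3.congr_deriv ?_
      push_cast
      ring
    exact (hderiv w hw).add h2
  -- basic bounds used throughout
  set t := β * m * l with htdef
  have ht0 : 0 ≤ t := by rw [htdef]; exact mul_nonneg (mul_nonneg hβ.le hm0) hl0
  have ht1 : (0:ℝ) < 1 + t := by linarith
  have h1δ : 0 ≤ 1 - δ := by
    have h : t / (1 + t) ≤ 1 := by rw [div_le_one ht1]; linarith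
    linarith [hδ1, h]
  have hδt : δ * (1 + t) ≤ t := by
    calc δ * (1+t) ≤ (t/(1+t)) * (1+t) := mul_le_mul_of_nonneg_right hδ1 ht1.le
      _ = t := by field_simp
  have hδle : δ ≤ t * (1 - δ) := by linarith only [hδt]
  clear_value t
  -- (A)  u * f v + c*u*v*(v-u) ≤ v * f u
  have hA : u * f v + c*u*v*(v-u) ≤ v * f u := by
    have h := concave_ratio hgconc hg0 hu huv hva
    simp only [hgdef] at h
    linarith only [h]
  -- ml ≤ v(v-u), m l^2 ≤ u (v-u)^2
  have hml : m * l ≤ v * (v - u) := mul_le_mul (hm.trans huv) hl hl0 hv.le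
  have hml2 : m * l^2 ≤ u * (v-u)^2 :=
    mul_le_mul hm (pow_le_pow_left₀ hl0 hl 2) (sq_nonneg l) hu.le
  -- I1 : u * f v ≤ (1-δ) * (v * f u)
  have hγt : γ * (β*m*l) ≤ c * v * (v - u) := by
    rw [hcdef]
    have := mul_le_mul_of_nonneg_left hml (mul_nonneg hβ.le hγpos.le)
    linarith only [this]
  have hδfv : δ * f v ≤ (1 - δ) * (c * v * (v - u)) := by
    calc δ * f v ≤ (t * (1 - δ)) * f v := mul_le_mul_of_nonneg_right hδle hfv.le
      _ ≤ (t * (1 - δ)) * γ := mul_le_mul_of_nonneg_left hγv (mul_nonneg ht0 h1δ)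
      _ = (1 - δ) * (γ * t) := by ring
      _ = (1 - δ) * (γ * (β*m*l)) := by rw [htdef]
      _ ≤ (1 - δ) * (c * v * (v - u)) := mul_le_mul_of_nonneg_left hγt h1δ
  have I1 : u * f v ≤ (1 - δ) * (v * f u) := by
    have e7 := mul_le_mul_of_nonneg_left hA h1δ
    have e8 := mul_le_mul_of_nonneg_left hδfv hu.le
    linarith only [e7, e8]
  -- isoclinic point : get x₀ ∈ S above v
  have hSne : {x | x ∈ Ioc (0:ℝ) a ∧ |f' x| < f x / x}.Nonempty := by
    by_contra h
    rw [not_nonempty_iff_eq_empty] at h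
    rw [h, Real.sSup_empty] at hvb
    linarith
  obtain ⟨x₀, hx₀S, hvx₀⟩ := exists_lt_of_lt_csSup hSne hvb
  obtain ⟨hx₀Ioc, hx₀iso⟩ := hx₀S
  have hx₀pos : 0 < x₀ := hx₀Ioc.1
  have hvIoc : v ∈ Ioc (0:ℝ) a := ⟨hv, hva⟩
  have hd1 : f' x₀ + 2*c*x₀ ≤ (g x₀ - g v) / (x₀ - v) :=
    left_deriv_le_slope hgconc hvmem hvx₀ hx₀Ioc.2 (hdg x₀ hx₀Ioc)
  have hd2 : (g x₀ - g v) / (x₀ - v) ≤ f' v + 2*c*v :=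
    slope_le_left_deriv hgconc hv hvx₀ hx₀Ioc.2 (hdg v hvIoc)
  have hd' : f' x₀ + 2*c*x₀ ≤ f' v + 2*c*v := hd1.trans hd2
  have hi : -f x₀ < f' x₀ * x₀ := by
    have h := (abs_lt.mp hx₀iso).1
    exact (div_lt_iff₀ hx₀pos).mp (by rw [neg_div]; exact h)
  have hfx₀ : v * f x₀ ≤ x₀ * f v - c*v*x₀*(x₀ - v) := by
    have h := concave_ratio hgconc hg0 hv hvx₀.le hx₀Ioc.2
    simp only [hgdef] at h
    linarith only [h]
  have hfv' : 0 ≤ v * f' v + f v := by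
    have e2 : v * x₀ * (f' x₀ + 2*c*x₀) ≤ v * x₀ * (f' v + 2*c*v) :=
      mul_le_mul_of_nonneg_left hd' (mul_nonneg hv.le hx₀pos.le)
    have e3 : v * (-f x₀) ≤ v * (f' x₀ * x₀) := mul_le_mul_of_nonneg_left hi.le hv.le
    have h8 : 0 ≤ c*v*(x₀-v)*x₀ :=
      mul_nonneg (mul_nonneg (mul_nonneg hc.le hv.le) (by linarith only [hvx₀])) hx₀pos.le
    have h6 : 0 ≤ x₀ * (v * f' v + f v) := by
      linarith only [e2, e3, hfx₀, h8]
    by_contra hcon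
    push_neg at hcon
    have h9 := mul_pos hx₀pos (neg_pos.mpr hcon)
    linarith only [h6, h9]
  rcases eq_or_lt_of_le huv with rfl | huv'
  · -- u = v : then l = 0, t = 0, δ = 0
    have hl' : l = 0 := le_antisymm (by linarith) hl0
    have ht' : t = 0 := by rw [htdef, hl', mul_zero]
    have hδ' : δ = 0 := by
      rw [ht'] at hδ1
      simp only [zero_div] at hδ1
      linarith
    rw [hδ', max_self, min_self]
    linarith only [hfu.le]
  -- the main case u < v
  have hslope : (f' v + 2*c*v) * (v - u) ≤ g v - g u := by
    have h := left_deriv_le_slope hgconc humem huv' hva (hdg v hvIoc)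
    exact (le_div_iff₀ (by linarith : (0:ℝ) < v - u)).mp h
  have hB : u * f u ≤ v * f v - c*u*(v-u)^2 := by
    have e6 : (u*v) * ((f' v + 2*c*v) * (v - u)) ≤ (u*v) * (g v - g u) :=
      mul_le_mul_of_nonneg_left hslope (mul_nonneg hu.le hv.le)
    have e4 : 0 ≤ (u*(v-u)) * (v * f' v + f v) :=
      mul_nonneg (mul_nonneg hu.le (by linarith)) hfv'
    have goal' : v * (u * f u) ≤ v * (v * f v - c*u*(v-u)^2) := by
      simp only [hgdef] at e6
      have e9 : (0:ℝ) ≤ (v-u)^2 * f v := mul_nonneg (sq_nonneg (v-u)) hfv.le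
      linarith only [e6, e4, e9]
    exact le_of_mul_le_mul_left goal' hv
  -- I2 : u * f u ≤ (1-δ) * (v * f v)
  have hδvfv : δ * (v * f v) ≤ c * u * (v-u)^2 := by
    have hnn : (0:ℝ) ≤ β*m*l^2/a :=
      div_nonneg (mul_nonneg (mul_nonneg hβ.le hm0) (sq_nonneg l)) ha.le
    have h1 : δ * (v * f v) ≤ (β*m*l^2/a) * (a*γ) := by
      apply mul_le_mul hδ2 _ (mul_nonneg hv.le hfv.le) hnn
      exact mul_le_mul hva hγv hfv.le ha.le
    have h2 : (β*m*l^2/a) * (a*γ) = β*γ*(m*l^2) := by field_simp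
    have h3 : β*γ*(m*l^2) ≤ β*γ*(u*(v-u)^2) :=
      mul_le_mul_of_nonneg_left hml2 (mul_nonneg hβ.le hγpos.le)
    calc δ * (v * f v) ≤ β*γ*(m*l^2) := by rw [← h2]; exact h1
      _ ≤ β*γ*(u*(v-u)^2) := h3
      _ = c*u*(v-u)^2 := by rw [hcdef]; ring
  have I2 : u * f u ≤ (1 - δ) * (v * f v) := by linarith only [hB, hδvfv]
  -- combine
  rcases le_total (f u) (f v) with h | h
  · rw [max_eq_right h, min_eq_left h]
    linarith only [I1]
  · rw [max_eq_left h, min_eq_right h]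
    linarith only [I2]
/-- Theorem (preinvattr): for an isoclinic equiconcave skew product
`F(θ,x) = (R θ, ψ_θ x)` on `B × [0,a]`, if `φ : B → [0,a]` is preinvariant and
positive at every non-pinching point, then the graph of `φ` is an attractor whose
basin contains every point whose forward trajectory avoids `B × {0}`.
Here `ψ' θ` is the left derivative of `ψ θ`, `b σ` its isoclinic point, a point `θ` is
pinching if `ψ_{Rⁿθ} ≡ 0` for infinitely many `n`, and preinvariance means the
invariance equation `ψ_{Rⁿθ}(φ(Rⁿθ)) = φ(Rⁿ⁺¹θ)` holds for all large `n`. -/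
theorem preinvariant_graph_is_attractor {B : Type*} (a β : ℝ) (ha : 0 < a) (hβ : 0 < β)
    (R : B → B) (ψ ψ' : B → ℝ → ℝ) (b : B → ℝ)
    (hmap : ∀ θ, MapsTo (ψ θ) (Icc 0 a) (Icc 0 a))
    (hzero : ∀ θ, ψ θ 0 = 0)
    (hcont : ∀ θ, ContinuousOn (ψ θ) (Icc 0 a))
    (hconc : ∀ θ, ConcaveOn ℝ (Icc 0 a)
      (fun x => ψ θ x + β * sSup (ψ θ '' Icc 0 a) * x ^ 2))
    (hderiv : ∀ θ, ∀ x ∈ Ioc (0:ℝ) a, HasDerivWithinAt (ψ θ) (ψ' θ x) (Iio x) x)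
    (hb : ∀ θ, b θ = sSup {x | x ∈ Ioc (0:ℝ) a ∧ |ψ' θ x| < ψ θ x / x})
    (hiso : ∀ θ, (∃ x ∈ Icc (0:ℝ) a, ψ (R θ) x ≠ 0) →
      ∀ x ∈ Icc (0:ℝ) a, ψ θ x < b (R θ))
    (φ : B → ℝ) (hφmem : ∀ θ, φ θ ∈ Icc 0 a)
    (hφpre : ∀ θ, ∃ N : ℕ, ∀ n ≥ N,
      ψ (R^[n] θ) (φ (R^[n] θ)) = φ (R^[n + 1] θ))
    (hφpos : ∀ θ, ¬ {n : ℕ | ∀ x ∈ Icc (0:ℝ) a, ψ (R^[n] θ) x = 0}.Infinite →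
      0 < φ θ) :
    ∀ θ, ∀ x ∈ Icc 0 a,
      (∀ n : ℕ, ((fun p : B × ℝ => (R p.1, ψ p.1 p.2))^[n] (θ, x)).2 ≠ 0) →
      Tendsto (fun n : ℕ =>
          |((fun p : B × ℝ => (R p.1, ψ p.1 p.2))^[n] (θ, x)).2 - φ (R^[n] θ)|)
        atTop (nhds 0) := by
  intro θ x hx hne
  set F : B × ℝ → B × ℝ := fun p => (R p.1, ψ p.1 p.2) with hFdef
  set X : ℕ → ℝ := fun n => (F^[n] (θ, x)).2 with hXdef
  set P : ℕ → ℝ := fun n => φ (R^[n] θ) with hPdef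
  obtain ⟨N, hN⟩ := hφpre θ
  -- the orbit as a pair
  have hpair : ∀ n, F^[n] (θ, x) = (R^[n] θ, X n) := by
    intro n
    induction n with
    | zero => rfl
    | succ k ih =>
      rw [Function.iterate_succ_apply', ih]
      have h1 : X (k+1) = ψ (R^[k] θ) (X k) := by
        show (F^[k+1] (θ, x)).2 = ψ (R^[k] θ) (X k)
        rw [Function.iterate_succ_apply', ih]
      rw [Function.iterate_succ_apply' R, h1]
  have hXsucc : ∀ n, X (n + 1) = ψ (R^[n] θ) (X n) := by
    intro n
    rw [show X (n+1) = (F^[n+1] (θ, x)).2 from rfl, Function.iterate_succ_apply', hpair n]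
  have hXmem : ∀ n, X n ∈ Icc 0 a := by
    intro n
    induction n with
    | zero => exact hx
    | succ k ih => rw [hXsucc k]; exact hmap _ ih
  have hXne : ∀ n, X n ≠ 0 := fun n => hne n
  have hXpos : ∀ n, 0 < X n := fun n => (hXmem n).1.lt_of_ne (Ne.symm (hXne n))
  have hPmem : ∀ n, P n ∈ Icc 0 a := fun n => hφmem _
  have hψX : ∀ n, ψ (R^[n] θ) (X n) ≠ 0 := by
    intro n
    rw [← hXsucc n]
    exact hXne (n+1)
  have hPpos : ∀ n, 0 < P n := by
    intro n
    apply hφpos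
    rw [Set.not_infinite]
    have hemp : {k : ℕ | ∀ y ∈ Icc (0:ℝ) a, ψ (R^[k] (R^[n] θ)) y = 0} = ∅ := by
      rw [Set.eq_empty_iff_forall_notMem]
      intro k hk
      simp only [mem_setOf_eq] at hk
      have h1 : R^[k] (R^[n] θ) = R^[k + n] θ := (Function.iterate_add_apply R k n θ).symm
      have h2 := hk (X (k + n)) (hXmem (k + n))
      rw [h1] at h2
      exact hψX (k + n) h2
    rw [hemp]
    exact Set.finite_empty
  have hPsucc : ∀ n, N ≤ n → ψ (R^[n] θ) (P n) = P (n + 1) := fun n hn => hN n hn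
  have hbelow : ∀ n, ∀ y ∈ Icc (0:ℝ) a, ψ (R^[n] θ) y < b (R^[n+1] θ) := by
    intro n y hy
    have hR : R^[n+1] θ = R (R^[n] θ) := Function.iterate_succ_apply' R n θ
    rw [hR]
    refine hiso (R^[n] θ) ?_ y hy
    rw [← hR]
    exact ⟨X (n+1), hXmem (n+1), hψX (n+1)⟩
  set ρ : ℕ → ℝ := fun n => max (X n) (P n) / min (X n) (P n) with hρdef
  have hminpos : ∀ n, 0 < min (X n) (P n) := fun n => lt_min (hXpos n) (hPpos n)
  have hρ1 : ∀ n, 1 ≤ ρ n := fun n => (one_le_div (hminpos n)).mpr min_le_max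
  set M := N + 1 with hMdef
  -- one-step contraction
  have hstep : ∀ n, M ≤ n → ∀ m l δ : ℝ, 0 ≤ m → 0 ≤ l → 0 ≤ δ →
      m ≤ min (X n) (P n) → l ≤ max (X n) (P n) - min (X n) (P n) →
      δ ≤ β*m*l/(1+β*m*l) → δ ≤ β*m*l^2/a →
      ρ (n+1) ≤ (1 - δ) * ρ n := by
    intro n hn m l δ hm0 hl0 hδ0 hm hl hδ1 hδ2
    obtain ⟨k, rfl⟩ : ∃ k, n = k + 1 := ⟨n - 1, by omega⟩
    have hkN : N ≤ k := by omega
    have hXb : X (k+1) < b (R^[k+1] θ) := by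
      rw [hXsucc k]; exact hbelow k _ (hXmem k)
    have hPb : P (k+1) < b (R^[k+1] θ) := by
      rw [← hPsucc k hkN]; exact hbelow k _ (hPmem k)
    have hfX : 0 < ψ (R^[k+1] θ) (X (k+1)) := by
      rw [← hXsucc (k+1)]; exact hXpos (k+2)
    have hfP : 0 < ψ (R^[k+1] θ) (P (k+1)) := by
      rw [hPsucc (k+1) (by omega)]; exact hPpos (k+2)
    have hXe : ψ (R^[k+1] θ) (X (k+1)) = X (k+2) := (hXsucc (k+1)).symm
    have hPe : ψ (R^[k+1] θ) (P (k+1)) = P (k+2) := hPsucc (k+1) (by omega)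
    have hmin2 : 0 < min (X (k+2)) (P (k+2)) := hminpos (k+2)
    rcases le_total (X (k+1)) (P (k+1)) with hc | hc
    · have humin : min (X (k+1)) (P (k+1)) = X (k+1) := min_eq_left hc
      have hvmax : max (X (k+1)) (P (k+1)) = P (k+1) := max_eq_right hc
      rw [humin] at hm
      rw [hvmax, humin] at hl
      have hvb' : P (k+1) < sSup {y | y ∈ Ioc (0:ℝ) a ∧
          |ψ' (R^[k+1] θ) y| < ψ (R^[k+1] θ) y / y} := by
        rw [← hb]; exact hPb
      have hks := key_step ha hβ (ψ (R^[k+1] θ)) (ψ' (R^[k+1] θ)) (hmap _) (hzero _)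
        (hconc _) (hderiv _) (hXpos (k+1)) hc (hPmem (k+1)).2 hvb' hfX hfP
        hm0 hl0 hδ0 hm hl hδ1 hδ2
      rw [hXe, hPe] at hks
      show max (X (k+2)) (P (k+2)) / min (X (k+2)) (P (k+2)) ≤
        (1 - δ) * (max (X (k+1)) (P (k+1)) / min (X (k+1)) (P (k+1)))
      rw [humin, hvmax, ← mul_div_assoc, div_le_div_iff₀ hmin2 (hXpos (k+1))]
      linarith only [hks]
    · have humin : min (X (k+1)) (P (k+1)) = P (k+1) := min_eq_right hc
      have hvmax : max (X (k+1)) (P (k+1)) = X (k+1) := max_eq_left hc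
      rw [humin] at hm
      rw [hvmax, humin] at hl
      have hvb' : X (k+1) < sSup {y | y ∈ Ioc (0:ℝ) a ∧
          |ψ' (R^[k+1] θ) y| < ψ (R^[k+1] θ) y / y} := by
        rw [← hb]; exact hXb
      have hks := key_step ha hβ (ψ (R^[k+1] θ)) (ψ' (R^[k+1] θ)) (hmap _) (hzero _)
        (hconc _) (hderiv _) (hPpos (k+1)) hc (hXmem (k+1)).2 hvb' hfP hfX
        hm0 hl0 hδ0 hm hl hδ1 hδ2
      rw [hXe, hPe] at hks
      rw [max_comm, min_comm] at hks
      show max (X (k+2)) (P (k+2)) / min (X (k+2)) (P (k+2)) ≤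
        (1 - δ) * (max (X (k+1)) (P (k+1)) / min (X (k+1)) (P (k+1)))
      rw [humin, hvmax, ← mul_div_assoc, div_le_div_iff₀ hmin2 (hPpos (k+1))]
      linarith only [hks]
  -- monotonicity of ρ
  have hmono : ∀ n j, M ≤ n → ρ (n + j) ≤ ρ n := by
    intro n j hn
    induction j with
    | zero => exact le_rfl
    | succ i ih =>
      have hs := hstep (n+i) (by omega) 0 0 0 le_rfl le_rfl le_rfl
        (hminpos (n+i)).le (sub_nonneg.mpr min_le_max) (by norm_num) (by norm_num)
      have he : n + (i+1) = (n+i) + 1 := by omega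
      rw [he]
      calc ρ ((n+i)+1) ≤ (1 - 0) * ρ (n+i) := hs
        _ = ρ (n+i) := by ring
        _ ≤ ρ n := ih
  have hmono' : ∀ n n', M ≤ n → n ≤ n' → ρ n' ≤ ρ n := by
    intro n n' hn h
    have := hmono n (n' - n) hn
    rwa [Nat.add_sub_cancel' h] at this
  -- conclusion
  rw [Metric.tendsto_atTop]
  intro ε hε
  have hD1 : 1 ≤ ρ M := hρ1 M
  have hD0 : 0 < ρ M := by linarith
  set D := ρ M with hDdef
  set m := ε / (2 * D) with hmdef
  set l := ε / 2 with hldef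
  have hm0 : 0 < m := div_pos hε (by linarith)
  have hl0 : 0 < l := half_pos hε
  have hβml : 0 < β * m * l := mul_pos (mul_pos hβ hm0) hl0
  have hβml1 : (0:ℝ) < 1 + β * m * l := by linarith
  set δ := min (β*m*l/(1+β*m*l)) (β*m*l^2/a) with hδdef
  have hδpos : 0 < δ := lt_min (div_pos hβml hβml1)
    (div_pos (mul_pos (mul_pos hβ hm0) (by positivity)) ha)
  have hδlt1 : δ < 1 := by
    have h1 : β*m*l/(1+β*m*l) < 1 := by rw [div_lt_one hβml1]; linarith
    exact (min_le_left _ _).trans_lt h1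
  obtain ⟨k, hk⟩ := ((tendsto_pow_atTop_nhds_zero_of_lt_one (by linarith : (0:ℝ) ≤ 1 - δ)
    (by linarith : 1 - δ < 1)).eventually (gt_mem_nhds (show (0:ℝ) < 1/D by positivity))).exists
  have hkD : (1-δ)^k * D < 1 := by rw [← lt_div_iff₀ hD0]; exact hk
  have hgood : ∃ n₀, M ≤ n₀ ∧ ∀ n, n₀ ≤ n →
      ¬(m ≤ min (X n) (P n) ∧ l ≤ max (X n) (P n) - min (X n) (P n)) := by
    by_contra hcon
    push_neg at hcon
    have hiter : ∀ j : ℕ, ∃ n, M ≤ n ∧ ρ n ≤ (1-δ)^j * D := by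
      intro j
      induction j with
      | zero => exact ⟨M, le_rfl, by simp [hDdef]⟩
      | succ i ih =>
        obtain ⟨n, hnM, hρn⟩ := ih
        obtain ⟨n', hn', hbad⟩ := hcon n hnM
        have h1 : ρ n' ≤ ρ n := hmono' n n' hnM hn'
        have h2 := hstep n' (hnM.trans hn') m l δ hm0.le hl0.le hδpos.le hbad.1 hbad.2
          (min_le_left _ _) (min_le_right _ _)
        refine ⟨n' + 1, by omega, ?_⟩
        calc ρ (n'+1) ≤ (1-δ) * ρ n' := h2
          _ ≤ (1-δ) * ((1-δ)^i * D) :=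
            mul_le_mul_of_nonneg_left (h1.trans hρn) (by linarith)
          _ = (1-δ)^(i+1) * D := by ring
    obtain ⟨n, hnM, hρn⟩ := hiter k
    have := hρ1 n
    linarith only [hkD, hρn, this]
  obtain ⟨n₀, hn₀M, hg⟩ := hgood
  refine ⟨n₀, fun n hn => ?_⟩
  have hnM : M ≤ n := hn₀M.trans hn
  have habs : |X n - P n| = max (X n) (P n) - min (X n) (P n) := by
    rw [max_sub_min_eq_abs, abs_sub_comm]
  rw [Real.dist_0_eq_abs, abs_abs]
  have hdn := hg n hn
  rw [not_and_or, not_le, not_le] at hdn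
  rcases hdn with hlt | hlt
  · -- min < m : both orbits are tiny
    have hmax : max (X n) (P n) = ρ n * min (X n) (P n) :=
      (div_mul_cancel₀ _ (hminpos n).ne').symm
    have hρD : ρ n ≤ D := hmono' M n le_rfl hnM
    have h2 : ρ n * min (X n) (P n) ≤ D * m :=
      mul_le_mul hρD hlt.le (hminpos n).le (by linarith)
    have h3 : D * m = ε / 2 := by
      rw [hmdef]
      field_simp
    have h4 : max (X n) (P n) - min (X n) (P n) < ε := by
      have := hminpos n
      rw [hmax]
      linarith
    rw [habs]
    exact h4
  · -- spread < l
    rw [habs]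
    have : l < ε := by rw [hldef]; linarith
    linarith
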